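/- In the FALKON setting, let β_∞ = W^{-1} B^⊤ K_nM^⊤ ŷ for ŷ ∈ ℝ^n. Then ‖W^{1/2} β_∞‖ ≤ ‖ŷ‖. -/

import Mathlib

open ContinuousLinearMap

/-- FALKON: for `β_∞ = W⁻¹ B^⊤ K_nM^⊤ ŷ`, one has `‖W^{1/2} β_∞‖ ≤ ‖ŷ‖`, with
`K_nM = √(nM) Ŝ_n Ŝ_M*`, `Ĉ_n = Ŝ_n* Ŝ_n`, `V = √(nM) Ŝ_M* B A` an isometry,
`W = A^{-⊤}(V* Ĉ_n V + λI)A^{-1}` positive definite, and `Wh` the positive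
square root of `W`. -/
theorem stmt18 {H : Type*} [NormedAddCommGroup H] [InnerProductSpace ℝ H]
    [CompleteSpace H] [TopologicalSpace.SeparableSpace H] {n M q : ℕ}
    (hn : 0 < n) (hM : 0 < M) (lam : ℝ) (hlam : 0 < lam)
    (Sn : H →L[ℝ] EuclideanSpace ℝ (Fin n))
    (SM : H →L[ℝ] EuclideanSpace ℝ (Fin M))
    (D : EuclideanSpace ℝ (Fin M) →L[ℝ] EuclideanSpace ℝ (Fin M))
    (Q : EuclideanSpace ℝ (Fin q) →L[ℝ] EuclideanSpace ℝ (Fin M))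
    (T Tinv A Ainv : EuclideanSpace ℝ (Fin q) →L[ℝ] EuclideanSpace ℝ (Fin q))
    (hT1 : T ∘L Tinv = 1) (hT2 : Tinv ∘L T = 1)
    (hA1 : A ∘L Ainv = 1) (hA2 : Ainv ∘L A = 1)
    (KnM : EuclideanSpace ℝ (Fin M) →L[ℝ] EuclideanSpace ℝ (Fin n))
    (hKnM : KnM = Real.sqrt (n * M) • (Sn ∘L adjoint SM))
    (Cn : H →L[ℝ] H) (hCn : Cn = adjoint Sn ∘L Sn)
    (B : EuclideanSpace ℝ (Fin q) →L[ℝ] EuclideanSpace ℝ (Fin M))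
    (hB : B = (Real.sqrt n)⁻¹ • (D ∘L Q ∘L Tinv ∘L Ainv))
    (V : EuclideanSpace ℝ (Fin q) →L[ℝ] H)
    (hV : V = Real.sqrt (n * M) • (adjoint SM ∘L B ∘L A))
    (hVV : adjoint V ∘L V = 1)
    (W Wi Wh : EuclideanSpace ℝ (Fin q) →L[ℝ] EuclideanSpace ℝ (Fin q))
    (hW : W = adjoint Ainv ∘L (adjoint V ∘L Cn ∘L V + lam • 1) ∘L Ainv)
    (hWi1 : W ∘L Wi = 1) (hWi2 : Wi ∘L W = 1)
    (hWhpos : Wh.IsPositive) (hWh : Wh ∘L Wh = W)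
    (y : EuclideanSpace ℝ (Fin n)) :
    ‖Wh (Wi (adjoint B (adjoint KnM y)))‖ ≤ ‖y‖ := by

  set z := adjoint B (adjoint KnM y) with hz
  set w := Wi z with hwdef
  set v := Ainv w with hvdef
  set r := Sn (V v) with hrdef
  have hWw : W w = z := by
    have := congrFun (congrArg DFunLike.coe hWi1) z
    simpa using this
  have hsa : adjoint Wh = Wh := ContinuousLinearMap.isSelfAdjoint_iff'.mp hWhpos.isSelfAdjoint
  have ht1 : ‖Wh w‖ ^ 2 = (inner ℝ (W w) w : ℝ) := by
    rw [← real_inner_self_eq_norm_sq, ← hWh]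
    simp only [ContinuousLinearMap.comp_apply]
    conv_rhs => rw [show Wh (Wh w) = adjoint Wh (Wh w) by rw [hsa]]
    rw [ContinuousLinearMap.adjoint_inner_left]
  have hAv : A v = w := by
    simpa using congrFun (congrArg DFunLike.coe hA1) w
  have hKB : KnM (B w) = r := by
    rw [hKnM, hrdef, hV]
    simp only [ContinuousLinearMap.smul_apply, ContinuousLinearMap.comp_apply, map_smul, hAv]
  have ht2 : (inner ℝ z w : ℝ) = inner ℝ y r := by
    rw [hz, ContinuousLinearMap.adjoint_inner_left, ContinuousLinearMap.adjoint_inner_left, hKB]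
  have ht3 : (inner ℝ (W w) w : ℝ) = ‖r‖ ^ 2 + lam * ‖v‖ ^ 2 := by
    rw [hW]
    simp only [ContinuousLinearMap.comp_apply]
    rw [ContinuousLinearMap.adjoint_inner_left]
    simp only [ContinuousLinearMap.add_apply, ContinuousLinearMap.smul_apply,
      ContinuousLinearMap.one_apply, ContinuousLinearMap.comp_apply, ← hvdef]
    rw [inner_add_left, ContinuousLinearMap.adjoint_inner_left, hCn]
    simp only [ContinuousLinearMap.comp_apply]
    rw [ContinuousLinearMap.adjoint_inner_left, real_inner_smul_left,
      real_inner_self_eq_norm_sq, real_inner_self_eq_norm_sq]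
  have key1 : ‖Wh w‖ ^ 2 = ‖r‖ ^ 2 + lam * ‖v‖ ^ 2 := ht1.trans ht3
  have key2 : ‖Wh w‖ ^ 2 = (inner ℝ y r : ℝ) := by rw [ht1, hWw, ht2]
  have hr_le : ‖r‖ ≤ ‖Wh w‖ := by
    have h1 : ‖r‖ ^ 2 ≤ ‖Wh w‖ ^ 2 := by
      have h2 : 0 ≤ lam * ‖v‖ ^ 2 := mul_nonneg hlam.le (sq_nonneg _)
      linarith [key1]
    exact (pow_le_pow_iff_left₀ (norm_nonneg r) (norm_nonneg (Wh w)) two_ne_zero).mp h1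
  have hcs : (inner ℝ y r : ℝ) ≤ ‖y‖ * ‖r‖ := real_inner_le_norm y r
  have : ‖Wh w‖ ^ 2 ≤ ‖y‖ * ‖Wh w‖ := by
    calc ‖Wh w‖ ^ 2 = (inner ℝ y r : ℝ) := key2
    _ ≤ ‖y‖ * ‖r‖ := hcs
    _ ≤ ‖y‖ * ‖Wh w‖ := by
        exact mul_le_mul_of_nonneg_left hr_le (norm_nonneg y)
  rcases eq_or_lt_of_le (norm_nonneg (Wh w)) with h0 | h0
  · rw [← h0]; exact norm_nonneg y
  · rw [pow_two] at this
    exact le_of_mul_le_mul_right (by linarith [this]) h0
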